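/- Let γ : ℕ → S be a numbering, and suppose there exists a total computable function f : ℕ → ℕ such that for every n, if φ_n(f(n)) is defined then φ_n(f(n)) ~γ f(n). Then γ is precomplete. -/

import Mathlib

/-- The `n`-th unary partial computable function, in the standard numbering via codes. -/
def phi (n : ℕ) : ℕ →. ℕ := (Denumerable.ofNat Nat.Partrec.Code n).eval

/-- A numbering `γ : ℕ → S` (a surjection) is precomplete if every partial computable
function can be totalized modulo `~γ`. -/
def Precomplete {S : Type*} (γ : ℕ → S) : Prop :=
  ∀ ψ : ℕ →. ℕ, Nat.Partrec ψ →
    ∃ f : ℕ → ℕ, Computable f ∧ ∀ n : ℕ, ∀ y ∈ ψ n, γ (f n) = γ y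

/-- Converse of the ABS form of Ershov's recursion theorem: if a numbering admits a total
computable fixed-point finder, then it is precomplete. -/
theorem precomplete_of_fixed_points {S : Type*} (γ : ℕ → S) (hsurj : Function.Surjective γ)
    (f : ℕ → ℕ) (hf : Computable f)
    (hfix : ∀ n : ℕ, ∀ y ∈ phi n (f n), γ y = γ (f n)) :
    Precomplete γ := by
  intro ψ hψ
  -- code for fun p => ψ p.unpair.1
  obtain ⟨c, hc⟩ := Nat.Partrec.Code.exists_code.1
    (hψ.comp (Nat.Partrec.of_primrec Nat.Primrec.left))
  -- e n := encode (curry c n), so phi (e n) x = ψ n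
  set e : ℕ → ℕ := fun n => Encodable.encode (Nat.Partrec.Code.curry c n) with he
  have hecomp : Computable e :=
    (Primrec.encode.comp
      (Nat.Partrec.Code.primrec₂_curry.comp (Primrec.const c) Primrec.id)).to_comp
  have hphi : ∀ n x, phi (e n) x = ψ n := by
    intro n x
    simp [phi, he, Nat.Partrec.Code.eval_curry, hc, Seq.seq]
    exact (Part.bind_eq_bind _ _).trans (Part.bind_some n ψ)
  refine ⟨fun n => f (e n), hf.comp hecomp, ?_⟩
  intro n y hy
  have : y ∈ phi (e n) (f (e n)) := by rw [hphi]; exact hy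
  exact (hfix (e n) y this).symm
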